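/- arXiv:1112.6250 — 4 statements merged into one kernel-verified Lean document; each statement's English description precedes it below -/
import Mathlib

section
/- Let p be an odd prime and s ≥ 1, and let G₀ = Γ₀(pˢ)/Γ(pˢ). Then G₀/(G₀'G₀²) is cyclic of order 2. -/
open CongruenceSubgroup
open scoped MatrixGroups

instance (N : ℕ) : (Gamma N).Normal := Gamma_normal N

namespace Stmt10Aux

open Subgroup Matrix

variable (N : ℕ)

/-- The lower-right entry of a `Gamma0 N` matrix, as a unit of `ZMod N`. -/
def dUnit : Gamma0 N →* (ZMod N)ˣ where
  toFun γ :=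
    { val := Gamma0Map N γ
      inv := Gamma0Map N γ⁻¹
      val_inv := by rw [← _root_.map_mul, mul_inv_cancel, _root_.map_one]
      inv_val := by rw [← _root_.map_mul, inv_mul_cancel, _root_.map_one] }
  map_one' := Units.ext (map_one (Gamma0Map N))
  map_mul' a b := Units.ext (_root_.map_mul (Gamma0Map N) a b)

lemma dUnit_val (γ : Gamma0 N) :
    ((dUnit N γ : (ZMod N)ˣ) : ZMod N) = ((γ : SL(2,ℤ)) 1 1 : ZMod N) := rfl

lemma gamma_le_ker : (Gamma N).subgroupOf (Gamma0 N) ≤ (dUnit N).ker := by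
  intro γ hγ
  rw [Subgroup.mem_subgroupOf] at hγ
  rw [Gamma_mem] at hγ
  rw [MonoidHom.mem_ker]
  ext
  rw [dUnit_val]
  exact hγ.2.2.2

/-- The induced map on `Γ₀(N)/Γ(N)`. -/
def Dbar : (Gamma0 N ⧸ (Gamma N).subgroupOf (Gamma0 N)) →* (ZMod N)ˣ :=
  QuotientGroup.lift _ (dUnit N) (gamma_le_ker N)

lemma Dbar_mk (γ : Gamma0 N) : Dbar N (QuotientGroup.mk γ) = dUnit N γ := rfl

lemma dUnit_surjective [NeZero N] : Function.Surjective (dUnit N) := by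
  intro u
  set d : ℤ := ((u : ZMod N).val : ℤ) with hd
  set a : ℤ := (((u⁻¹ : (ZMod N)ˣ) : ZMod N).val : ℤ) with ha
  have hdc : ((d : ℤ) : ZMod N) = (u : ZMod N) := by
    rw [hd]; push_cast; simp [ZMod.natCast_val, ZMod.cast_id]
  have hac : ((a : ℤ) : ZMod N) = ((u⁻¹ : (ZMod N)ˣ) : ZMod N) := by
    rw [ha]; push_cast; simp [ZMod.natCast_val, ZMod.cast_id]
  have h1 : ((a * d - 1 : ℤ) : ZMod N) = 0 := by
    push_cast
    rw [hdc, hac]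
    simp
  have h2 : (N : ℤ) ∣ a * d - 1 := (ZMod.intCast_zmod_eq_zero_iff_dvd _ N).mp h1
  obtain ⟨k, hk⟩ := h2
  have hdet : (!![a, k; (N : ℤ), d]).det = 1 := by
    rw [Matrix.det_fin_two_of]; linarith
  have hmem : (⟨!![a, k; (N : ℤ), d], hdet⟩ : SL(2,ℤ)) ∈ Gamma0 N := by
    refine Gamma0_mem.mpr ?_
    simp
  refine ⟨⟨_, hmem⟩, ?_⟩
  ext
  rw [dUnit_val]
  simpa using hdc

lemma Dbar_surjective [NeZero N] : Function.Surjective (Dbar N) := by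
  intro u
  obtain ⟨γ, hγ⟩ := dUnit_surjective N u
  exact ⟨QuotientGroup.mk γ, by rw [Dbar_mk, hγ]⟩

/-- Key sub-claim: if the d-invariant of a class in `Γ₀(N)/Γ(N)` is 1, the class is
a square. -/
lemma sq_of_d_eq_one [NeZero N] (h2 : IsUnit (2 : ZMod N))
    (x : Gamma0 N ⧸ (Gamma N).subgroupOf (Gamma0 N)) (hx : Dbar N x = 1) :
    ∃ w, x = w ^ 2 := by
  obtain ⟨γ, rfl⟩ := QuotientGroup.mk_surjective x
  have hd : ((γ : SL(2,ℤ)) 1 1 : ZMod N) = 1 := by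
    rw [Dbar_mk] at hx
    have := congrArg (Units.val) hx
    rwa [dUnit_val] at this
  have hc0 : ((γ : SL(2,ℤ)) 1 0 : ZMod N) = 0 := Gamma0_mem.mp γ.2
  have hdet : (γ : SL(2,ℤ)).1.det = 1 := (γ : SL(2,ℤ)).2
  rw [Matrix.det_fin_two] at hdet
  have ha : ((γ : SL(2,ℤ)) 0 0 : ZMod N) = 1 := by
    have := congrArg (fun z : ℤ => (z : ZMod N)) hdet
    push_cast at this
    rw [hd, hc0] at this
    simpa using this
  -- choose c with 2 c ≡ b
  set b : ℤ := (γ : SL(2,ℤ)) 0 1 with hb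
  set c : ℤ := (((h2.unit⁻¹ : (ZMod N)ˣ) * (b : ZMod N)).val : ℤ) with hcdef
  have hcc : ((c : ℤ) : ZMod N) = (h2.unit⁻¹ : (ZMod N)ˣ) * (b : ZMod N) := by
    rw [hcdef]; push_cast; simp [ZMod.natCast_val, ZMod.cast_id]
  have h2c : ((2 * c : ℤ) : ZMod N) = (b : ZMod N) := by
    push_cast
    rw [hcc, ← mul_assoc, h2.mul_val_inv, one_mul]
  -- the square root matrix
  have hwdet : (!![(1:ℤ), c; 0, 1]).det = 1 := by rw [Matrix.det_fin_two_of]; ring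
  have hwmem : (⟨!![(1:ℤ), c; 0, 1], hwdet⟩ : SL(2,ℤ)) ∈ Gamma0 N := by
    refine Gamma0_mem.mpr ?_; simp
  set w : Gamma0 N := ⟨⟨!![(1:ℤ), c; 0, 1], hwdet⟩, hwmem⟩ with hw
  refine ⟨QuotientGroup.mk w, ?_⟩
  rw [← QuotientGroup.mk_pow]
  rw [QuotientGroup.eq]
  rw [Subgroup.mem_subgroupOf]
  rw [Gamma_mem]
  -- compute the matrix of γ⁻¹ * w^2
  set A : SL(2,ℤ) := (γ : SL(2,ℤ)) with hA
  have key : ((γ⁻¹ * w ^ 2 : Gamma0 N) : SL(2,ℤ)).1 =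
      !![A 1 1, 2*c*(A 1 1) - A 0 1; -(A 1 0), -(A 1 0)*(2*c) + A 0 0] := by
    have e1 : ((γ⁻¹ * w ^ 2 : Gamma0 N) : SL(2,ℤ)).1
        = (A⁻¹).1 * ((w : SL(2,ℤ)).1 * (w : SL(2,ℤ)).1) := by
      simp [pow_two, hA]
    rw [e1, Matrix.SpecialLinearGroup.SL2_inv_expl A]
    change (Matrix.of ![![A 1 1, -A 0 1], ![-A 1 0, A 0 0]]) * ((w : SL(2,ℤ)).1 * (w : SL(2,ℤ)).1) = _
    ext i j
    fin_cases i <;> fin_cases j <;>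
      simp [hw, Matrix.mul_apply, Fin.sum_univ_succ]
    · ring
    · left; ring
  refine ⟨?_, ?_, ?_, ?_⟩ <;> rw [key]
  · simpa using hd
  · have : (((2*c*(A 1 1) - A 0 1 : ℤ)) : ZMod N) = 0 := by
      push_cast
      rw [show ((A 1 1 : ℤ) : ZMod N) = 1 from hd]
      push_cast at h2c
      rw [mul_one, h2c, sub_self]
    simpa using this
  · simpa using hc0
  · have : (((-(A 1 0)*(2*c) + A 0 0 : ℤ)) : ZMod N) = 1 := by
      push_cast
      rw [show ((A 1 0 : ℤ) : ZMod N) = 0 from hc0, show ((A 0 0 : ℤ) : ZMod N) = 1 from ha]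
      ring
    simpa using this

lemma units_sq_eq_one {p s : ℕ} (hp : p.Prime) (hodd : Odd p)
    [NeZero (p ^ s)] (x : (ZMod (p ^ s))ˣ) (h : x ^ 2 = 1) : x = 1 ∨ x = -1 := by
  have hp3 : 3 ≤ p := by
    have h2 := hp.two_le
    have h1 := Nat.odd_iff.mp hodd
    omega
  set v : ℤ := ((x : ZMod (p ^ s)).val : ℤ) with hv
  have hvc : ((v : ℤ) : ZMod (p ^ s)) = (x : ZMod (p ^ s)) := by
    rw [hv]; push_cast; simp [ZMod.natCast_val, ZMod.cast_id]
  have hu : ((v ^ 2 - 1 : ℤ) : ZMod (p ^ s)) = 0 := by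
    push_cast
    rw [hvc]
    have := congrArg (Units.val) h
    rw [Units.val_pow_eq_pow_val, Units.val_one] at this
    rw [this]; ring
  have hdvd : ((p : ℤ) ^ s) ∣ (v - 1) * (v + 1) := by
    have := (ZMod.intCast_zmod_eq_zero_iff_dvd _ (p ^ s)).mp hu
    push_cast at this
    convert this using 1
    ring
  have hpZ : Prime (p : ℤ) := Nat.prime_iff_prime_int.mp hp
  by_cases hc : (p : ℤ) ∣ v - 1
  · have hnc : ¬ (p : ℤ) ∣ v + 1 := by
      intro hc'
      have hd2 : (p : ℤ) ∣ 2 := by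
        have := dvd_sub hc' hc
        simpa using this
      have := Int.le_of_dvd (by norm_num) hd2
      omega
    have hcop : IsCoprime ((p : ℤ) ^ s) (v + 1) :=
      ((hpZ.coprime_iff_not_dvd).mpr hnc).pow_left
    have h1 : ((p : ℤ) ^ s) ∣ v - 1 := hcop.dvd_of_dvd_mul_right hdvd
    left
    ext
    rw [Units.val_one, ← hvc]
    have : ((v - 1 : ℤ) : ZMod (p ^ s)) = 0 := by
      rw [ZMod.intCast_zmod_eq_zero_iff_dvd]
      push_cast
      exact h1
    push_cast at this
    linear_combination this
  · have hcop : IsCoprime ((p : ℤ) ^ s) (v - 1) :=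
      ((hpZ.coprime_iff_not_dvd).mpr hc).pow_left
    have h1 : ((p : ℤ) ^ s) ∣ v + 1 := hcop.dvd_of_dvd_mul_left hdvd
    right
    ext
    rw [Units.val_neg, Units.val_one, ← hvc]
    have : ((v + 1 : ℤ) : ZMod (p ^ s)) = 0 := by
      rw [ZMod.intCast_zmod_eq_zero_iff_dvd]
      push_cast
      exact h1
    push_cast at this
    linear_combination this

/-- The subgroup of squares in `(ZMod (p^s))ˣ` has index 2. -/
lemma sq_index_two {p s : ℕ} (hp : p.Prime) (hodd : Odd p)
    [NeZero (p ^ s)] (hN : 2 < p ^ s) :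
    ((powMonoidHom 2 : (ZMod (p ^ s))ˣ →* (ZMod (p ^ s))ˣ).range).index = 2 := by
  haveI : Fact (2 < p ^ s) := ⟨hN⟩
  set G := (ZMod (p ^ s))ˣ
  set f : G →* G := powMonoidHom 2 with hf
  have hker : f.ker = Subgroup.zpowers (-1 : G) := by
    ext x
    rw [MonoidHom.mem_ker]
    constructor
    · intro hx
      rcases units_sq_eq_one hp hodd x hx with rfl | rfl
      · exact ⟨0, by simp⟩
      · exact ⟨1, by simp⟩
    · rintro ⟨k, rfl⟩
      show ((-1 : G) ^ k) ^ 2 = 1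
      rw [← zpow_natCast, ← _root_.zpow_mul, mul_comm, _root_.zpow_mul, zpow_natCast, neg_one_sq, _root_.one_zpow]
  have hm1 : (-1 : G) ≠ 1 := by
    intro hcontra
    have := congrArg (Units.val) hcontra
    rw [Units.val_neg, Units.val_one] at this
    exact ZMod.neg_one_ne_one this
  have hcard_ker : Nat.card f.ker = 2 := by
    rw [hker, Nat.card_zpowers]
    exact orderOf_eq_prime neg_one_sq hm1
  have h1 : Nat.card f.ker * f.ker.index = Nat.card G := Subgroup.card_mul_index f.ker
  have h2 : Nat.card f.range * f.range.index = Nat.card G := Subgroup.card_mul_index f.range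
  have h3 : f.ker.index = Nat.card f.range := Subgroup.index_ker f
  have hpos : 0 < Nat.card (f.range : Subgroup G) := Nat.card_pos
  rw [h3, hcard_ker] at h1
  have h4 : Nat.card f.range * f.range.index = Nat.card f.range * 2 := by
    rw [h2, ← h1, Nat.mul_comm]
  exact Nat.eq_of_mul_eq_mul_left hpos h4

end Stmt10Aux

open Stmt10Aux Subgroup

/-- For `p` an odd prime and `s ≥ 1`, with `G₀ = Γ₀(pˢ)/Γ(pˢ)`, the quotient
`G₀/(G₀'G₀²)` is cyclic of order 2; equivalently, the subgroup `G₀'G₀²` generated by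
all commutators and squares has index 2 in `G₀`. -/
theorem stmt_10 (p : ℕ) (hp : p.Prime) (hodd : Odd p) (s : ℕ) (hs : 1 ≤ s) :
    (commutator (Gamma0 (p ^ s) ⧸ (Gamma (p ^ s)).subgroupOf (Gamma0 (p ^ s))) ⊔
      Subgroup.closure
        {x : Gamma0 (p ^ s) ⧸ (Gamma (p ^ s)).subgroupOf (Gamma0 (p ^ s)) |
          ∃ g, x = g ^ 2}).index = 2 := by
  have hp3 : 3 ≤ p := by
    have h2 := hp.two_le
    have h1 := Nat.odd_iff.mp hodd
    omega
  haveI : NeZero (p ^ s) := ⟨pow_ne_zero s (by omega)⟩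
  have hN2 : 2 < p ^ s := by
    have := Nat.le_self_pow (by omega : s ≠ 0) p
    omega
  have h2u : IsUnit (2 : ZMod (p ^ s)) := by
    have hcop : Nat.Coprime 2 (p ^ s) := by
      apply Nat.Coprime.pow_right
      exact Nat.coprime_two_left.mpr hodd
    have := (ZMod.isUnit_iff_coprime 2 (p ^ s)).mpr hcop
    simpa using this
  set Sq : Subgroup (ZMod (p ^ s))ˣ :=
    (powMonoidHom 2 : (ZMod (p ^ s))ˣ →* (ZMod (p ^ s))ˣ).range with hSq
  set φ := (QuotientGroup.mk' Sq).comp (Dbar (p ^ s)) with hφ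
  have hker : (commutator (Gamma0 (p ^ s) ⧸ (Gamma (p ^ s)).subgroupOf (Gamma0 (p ^ s))) ⊔
      Subgroup.closure
        {x : Gamma0 (p ^ s) ⧸ (Gamma (p ^ s)).subgroupOf (Gamma0 (p ^ s)) |
          ∃ g, x = g ^ 2}) = φ.ker := by
    apply le_antisymm
    · apply sup_le
      · exact Abelianization.commutator_subset_ker (A := (ZMod (p ^ s))ˣ ⧸ Sq) φ
      · rw [Subgroup.closure_le]
        rintro x ⟨g, rfl⟩
        rw [SetLike.mem_coe, MonoidHom.mem_ker, map_pow]
        rw [hφ]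
        simp only [MonoidHom.coe_comp, Function.comp_apply]
        rw [← map_pow, QuotientGroup.mk'_apply, QuotientGroup.eq_one_iff]
        exact ⟨Dbar (p ^ s) g, rfl⟩
    · intro x hx
      rw [MonoidHom.mem_ker, hφ, MonoidHom.coe_comp, Function.comp_apply,
        QuotientGroup.mk'_apply, QuotientGroup.eq_one_iff] at hx
      obtain ⟨v, hv⟩ := hx
      obtain ⟨δ, hδ⟩ := dUnit_surjective (p ^ s) v
      set y : Gamma0 (p ^ s) ⧸ (Gamma (p ^ s)).subgroupOf (Gamma0 (p ^ s)) :=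
        QuotientGroup.mk δ with hy
      have hDy : Dbar (p ^ s) y = v := by rw [hy, Dbar_mk, hδ]
      have hDu : Dbar (p ^ s) (x * (y ^ 2)⁻¹) = 1 := by
        rw [map_mul, map_inv, map_pow, hDy]
        have : v ^ 2 = Dbar (p ^ s) x := hv
        rw [← this, mul_inv_cancel]
      obtain ⟨w, hw⟩ := sq_of_d_eq_one (p ^ s) h2u _ hDu
      have hxeq : x = w ^ 2 * y ^ 2 := by
        have := hw
        rw [mul_inv_eq_iff_eq_mul] at this
        rw [this]
      rw [hxeq]
      exact mul_mem
        (Subgroup.mem_sup_right (Subgroup.subset_closure ⟨w, rfl⟩))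
        (Subgroup.mem_sup_right (Subgroup.subset_closure ⟨y, rfl⟩))
  rw [hker, Subgroup.index_ker φ]
  have hsurj : Function.Surjective φ := by
    rw [hφ]
    exact (QuotientGroup.mk'_surjective Sq).comp (Dbar_surjective (p ^ s))
  rw [MonoidHom.range_eq_top.mpr hsurj]
  rw [Subgroup.card_top]
  have : Nat.card ((ZMod (p ^ s))ˣ ⧸ Sq) = Sq.index := rfl
  rw [this, hSq]
  exact sq_index_two hp hodd hN2
end

section
/- Let p be an odd prime and s ≥ 1, and let G₀ = Γ₀(pˢ)/Γ(pˢ). The image of -I in G₀ lies in G₀'G₀² if and only if p ≡ 1 (mod 4). -/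
open CongruenceSubgroup
open scoped MatrixGroups

theorem hensel_neg_one (p : ℕ) (hp : p.Prime) (hodd : Odd p) (h4 : p % 4 = 1) :
    ∀ k : ℕ, ∃ a : ℤ, (p : ℤ) ^ k ∣ a ^ 2 + 1 := by
  have : Fact p.Prime := ⟨hp⟩
  intro k
  induction k with
  | zero => exact ⟨0, by simp⟩
  | succ k ih =>
    obtain ⟨a, ha⟩ := ih
    obtain ⟨m, hm⟩ := ha
    -- 2a is invertible mod p (when k ≥ 1); handle k = 0 separately
    rcases Nat.eq_zero_or_pos k with hk | hk
    · -- need square root of -1 mod p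
      obtain ⟨b, hb⟩ := ZMod.exists_sq_eq_neg_one_iff.mpr (by omega : p % 4 ≠ 3)
      refine ⟨(b.val : ℤ), ?_⟩
      have : (((b.val : ℤ)^2 + 1 : ℤ) : ZMod p) = 0 := by
        push_cast
        rw [ZMod.natCast_val, ZMod.cast_id]
        rw [show (b:ZMod p)^2 = b * b from sq b, ← hb]; ring
      subst hk
      simpa [pow_one] using (ZMod.intCast_zmod_eq_zero_iff_dvd _ p).mp this
    · have hpa : ¬ (p : ℤ) ∣ a := by
        intro hdvd
        have h1 : (p:ℤ) ∣ a^2 + 1 := dvd_trans (dvd_pow_self _ (by omega)) ⟨m, hm⟩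
        have h2 : (p:ℤ) ∣ a^2 := by
          obtain ⟨c, hc⟩ := hdvd; exact ⟨c * a, by rw [hc]; ring⟩
        have : (p:ℤ) ∣ 1 := (Int.dvd_add_right h2).mp h1
        exact hp.one_lt.ne' (by
          have := Int.le_of_dvd one_pos this
          omega)
      have h2a : ((2 * a : ℤ) : ZMod p) ≠ 0 := by
        rw [Ne, ZMod.intCast_zmod_eq_zero_iff_dvd]
        intro hdvd
        rcases (Int.Prime.dvd_mul' (by exact_mod_cast hp) hdvd) with h | h
        · have h2 := Int.le_of_dvd two_pos h
          have h3 : p ∣ 2 := by exact_mod_cast Int.natCast_dvd_natCast.mp (by exact_mod_cast h)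
          have h4' := Nat.le_of_dvd two_pos h3
          have h5 := Nat.odd_iff.mp hodd
          have h6 := hp.two_le
          omega
        · exact hpa h
      set t : ℤ := (((-(m : ZMod p) * ((2*a : ℤ) : ZMod p)⁻¹ : ZMod p)).val : ℤ)
      have ht : (p : ℤ) ∣ m + 2 * a * t := by
        rw [← ZMod.intCast_zmod_eq_zero_iff_dvd]
        push_cast [t]
        rw [ZMod.natCast_val, ZMod.cast_id]
        have : ((2*a : ℤ) : ZMod p) * ((2*a : ℤ) : ZMod p)⁻¹ = 1 :=
          ZMod.mul_inv_of_unit _ (Ne.isUnit h2a)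
        push_cast at this ⊢
        calc (m : ZMod p) + 2 * a * (-(m:ZMod p) * (2 * (a:ZMod p))⁻¹)
            = (m : ZMod p) - (2 * (a:ZMod p)) * (2 * (a:ZMod p))⁻¹ * m := by ring
          _ = 0 := by rw [this]; ring
      refine ⟨a + t * (p:ℤ)^k, ?_⟩
      have expand : (a + t * (p:ℤ)^k)^2 + 1
          = (p:ℤ)^k * (m + 2*a*t) + t^2 * ((p:ℤ)^k)^2 := by
        rw [show (p:ℤ)^k * (m + 2*a*t) = (p:ℤ)^k * m + 2*a*t*(p:ℤ)^k by ring, ← hm]; ring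
      rw [expand]
      refine dvd_add (by
        obtain ⟨c, hc⟩ := ht
        rw [hc, pow_succ]; ring_nf; exact ⟨c, by ring⟩) ?_
      have : (p:ℤ)^(k+1) ∣ ((p:ℤ)^k)^2 := by
        rw [← pow_mul]; exact pow_dvd_pow _ (by omega)
      exact this.mul_left _


/-- For `p` an odd prime and `s ≥ 1`, with `G₀ = Γ₀(pˢ)/Γ(pˢ)`, the image of `-I` in `G₀`
lies in `G₀'G₀²` if and only if `p ≡ 1 (mod 4)`. -/
theorem stmt_11 (p : ℕ) (hp : p.Prime) (hodd : Odd p) (s : ℕ) (hs : 1 ≤ s)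
    (hneg : (-1 : SL(2, ℤ)) ∈ Gamma0 (p ^ s)) :
    ((QuotientGroup.mk (⟨-1, hneg⟩ : Gamma0 (p ^ s)) :
        Gamma0 (p ^ s) ⧸ (Gamma (p ^ s)).subgroupOf (Gamma0 (p ^ s))) ∈
      commutator (Gamma0 (p ^ s) ⧸ (Gamma (p ^ s)).subgroupOf (Gamma0 (p ^ s))) ⊔
        Subgroup.closure
          {x : Gamma0 (p ^ s) ⧸ (Gamma (p ^ s)).subgroupOf (Gamma0 (p ^ s)) |
            ∃ g, x = g ^ 2}) ↔ p % 4 = 1 := by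
  have hfact : Fact p.Prime := ⟨hp⟩
  constructor
  · -- forward: map to (ZMod (p^s))ˣ
    intro h
    set N := p ^ s with hN
    let φ : Gamma0 N →* (ZMod N)ˣ := (Gamma0Map N).toHomUnits
    have hker : ∀ x : Gamma0 N, x ∈ (Gamma N).subgroupOf (Gamma0 N) → φ x = 1 := by
      intro x hx
      have hx' : (x : SL(2, ℤ)) ∈ Gamma N := hx
      rw [Gamma_mem] at hx'
      apply Units.ext
      simpa [φ, Gamma0Map, MonoidHom.coe_toHomUnits] using hx'.2.2.2
    let ψ : (Gamma0 N ⧸ (Gamma N).subgroupOf (Gamma0 N)) →* (ZMod N)ˣ :=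
      QuotientGroup.lift _ φ hker
    have hle : commutator (Gamma0 N ⧸ (Gamma N).subgroupOf (Gamma0 N)) ⊔
        Subgroup.closure {x : Gamma0 N ⧸ (Gamma N).subgroupOf (Gamma0 N) | ∃ g, x = g ^ 2} ≤
        Subgroup.comap ψ (powMonoidHom 2 : (ZMod N)ˣ →* (ZMod N)ˣ).range := by
      refine sup_le ?_ ?_
      · rw [commutator_def, Subgroup.commutator_le]
        intro g _ h' _
        simp only [Subgroup.mem_comap]
        have : ψ (open scoped commutatorElement in ⁅g, h'⁆) = 1 := by
          rw [map_commutatorElement]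
          exact commutatorElement_eq_one_iff_commute.mpr (mul_comm _ _)
        rw [this]; exact one_mem _
      · rw [Subgroup.closure_le]
        rintro x ⟨g, rfl⟩
        simp only [SetLike.mem_coe, Subgroup.mem_comap, map_pow]
        exact ⟨ψ g, rfl⟩
    obtain ⟨u, hu⟩ := hle h
    -- hu : powMonoidHom 2 u = ψ (mk ⟨-1, hneg⟩)
    have hval : ψ (QuotientGroup.mk (⟨-1, hneg⟩ : Gamma0 N)) = -1 := by
      apply Units.ext
      show ((Gamma0Map N).toHomUnits (⟨-1, hneg⟩ : Gamma0 N) : ZMod N) = ((-1 : (ZMod N)ˣ) : ZMod N)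
      rw [MonoidHom.coe_toHomUnits]
      simp [Gamma0Map, Matrix.SpecialLinearGroup.coe_neg]
    have hu2 : (u : ZMod N) ^ 2 = -1 := by
      have := congrArg (Units.val) (hu.trans hval)
      simpa [powMonoidHom] using this
    -- push down to ZMod p
    have hdvd : p ∣ N := by
      rw [hN]; exact dvd_pow_self p (by omega)
    let f : ZMod N →+* ZMod p := ZMod.castHom hdvd (ZMod p)
    have : (f (u : ZMod N)) ^ 2 = -1 := by
      rw [← map_pow, hu2, map_neg, map_one]
    have hsq : IsSquare (-1 : ZMod p) := ⟨f (u : ZMod N), by rw [← this]; ring⟩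
    have h43 := ZMod.exists_sq_eq_neg_one_iff.mp hsq
    have h2 := Nat.odd_iff.mp hodd
    omega
  · -- backward: construct an explicit square root of -I in Gamma0
    intro h4
    obtain ⟨a, m, hm⟩ : ∃ a m : ℤ, a ^ 2 + 1 = (p : ℤ) ^ s * m := by
      obtain ⟨a, m, hm⟩ := hensel_neg_one p hp hodd h4 s
      exact ⟨a, m, hm⟩
    set N := p ^ s with hN
    have hNcast : ((p : ℤ) ^ s : ℤ) = (N : ℤ) := by push_cast [hN]; ring
    let M : Matrix (Fin 2) (Fin 2) ℤ := !![a, 1; (N : ℤ) * (-m), -a]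
    have hdet : M.det = 1 := by
      simp [M, Matrix.det_fin_two_of]
      rw [← hNcast]
      linarith [hm]
    let A : SL(2, ℤ) := ⟨M, hdet⟩
    have hA : A ∈ Gamma0 N := by
      rw [Gamma0_mem]
      show ((M 1 0 : ℤ) : ZMod N) = 0
      simp [M]
    have hAsq : A * A = -1 := by
      apply Matrix.SpecialLinearGroup.ext
      intro i j
      have hM : M * M = -(1 : Matrix (Fin 2) (Fin 2) ℤ) := by
        have key : (N : ℤ) * m = a ^ 2 + 1 := by rw [← hNcast, ← hm]
        ext i j
        fin_cases i <;> fin_cases j <;>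
          simp [M, Matrix.mul_apply, Fin.sum_univ_succ] <;> nlinarith [key]
      show ((A * A : SL(2, ℤ)) : Matrix (Fin 2) (Fin 2) ℤ) i j =
        ((-1 : SL(2, ℤ)) : Matrix (Fin 2) (Fin 2) ℤ) i j
      rw [Matrix.SpecialLinearGroup.coe_mul, Matrix.SpecialLinearGroup.coe_neg,
        Matrix.SpecialLinearGroup.coe_one]
      show (M * M) i j = _
      rw [hM]
    have hsq : (⟨A, hA⟩ : Gamma0 N) ^ 2 = ⟨-1, hneg⟩ := by
      apply Subtype.ext
      rw [SubgroupClass.coe_pow, sq]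
      exact hAsq
    apply Subgroup.mem_sup_right
    apply Subgroup.subset_closure
    exact ⟨QuotientGroup.mk (⟨A, hA⟩ : Gamma0 N), by rw [← hsq]; rfl⟩
end

section
/- Let s ≥ 1 and G₁ := Γ₁(2ˢ)/Γ(2^{s+1}). Then G₁/(G₁'G₁²) is isomorphic to (ℤ/2)². Moreover the image of -I lies in G₁'G₁² if and only if s = 1. -/
open CongruenceSubgroup
open scoped MatrixGroups

namespace Stmt17

open Matrix Matrix.SpecialLinearGroup ModularGroup

lemma sub_one_dvd {N : ℕ} {a : ℤ} (h : (a : ZMod N) = 1) : (N : ℤ) ∣ a - 1 := by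
  have h2 : ((a - 1 : ℤ) : ZMod N) = 0 := by push_cast [h]; ring
  exact (ZMod.intCast_zmod_eq_zero_iff_dvd _ _).mp h2

lemma cast2_eq_one {s : ℕ} {a : ℤ} (hs : 1 ≤ s) (h : (a : ZMod (2 ^ s)) = 1) :
    (a : ZMod 2) = 1 := by
  have h1 : (2 : ℤ) ∣ a - 1 := by
    refine dvd_trans ?_ (sub_one_dvd h)
    exact_mod_cast dvd_pow_self (2 : ℤ) (by omega : s ≠ 0)
  have h2 : ((a - 1 : ℤ) : ZMod 2) = 0 :=
    (ZMod.intCast_zmod_eq_zero_iff_dvd _ 2).mpr (by exact_mod_cast h1)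
  push_cast at h2; linear_combination h2

lemma c_dvd {s : ℕ} {A : SL(2, ℤ)} (hA : A ∈ Gamma1 (2 ^ s)) : (2 : ℤ) ^ s ∣ A 1 0 := by
  have h := ((Gamma1_mem (2 ^ s) A).mp hA).2.2
  have := (ZMod.intCast_zmod_eq_zero_iff_dvd (A 1 0) (2 ^ s)).mp h
  exact_mod_cast this

lemma a_odd {s : ℕ} {A : SL(2, ℤ)} (hs : 1 ≤ s) (hA : A ∈ Gamma1 (2 ^ s)) :
    ((A 0 0 : ℤ) : ZMod 2) = 1 :=
  cast2_eq_one hs ((Gamma1_mem (2 ^ s) A).mp hA).1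

lemma d_odd {s : ℕ} {A : SL(2, ℤ)} (hs : 1 ≤ s) (hA : A ∈ Gamma1 (2 ^ s)) :
    ((A 1 1 : ℤ) : ZMod 2) = 1 :=
  cast2_eq_one hs ((Gamma1_mem (2 ^ s) A).mp hA).2.1

/-- the map `A ↦ (b mod 2, (c/2^s) mod 2)` as a monoid hom on `Γ₁(2^s)`. -/
def psi (s : ℕ) (hs : 1 ≤ s) : Gamma1 (2 ^ s) →* Multiplicative (ZMod 2 × ZMod 2) where
  toFun A := Multiplicative.ofAdd
    ((((A : SL(2, ℤ)) 0 1 : ℤ) : ZMod 2), ((((A : SL(2, ℤ)) 1 0) / 2 ^ s : ℤ) : ZMod 2))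
  map_one' := by simp
  map_mul' := by
    rintro ⟨A, hA⟩ ⟨B, hB⟩
    obtain ⟨cA, hcA⟩ := c_dvd hA
    obtain ⟨cB, hcB⟩ := c_dvd hB
    have hmul := Matrix.two_mul_expl A.1 B.1
    rw [MulMemClass.mk_mul_mk, ← ofAdd_add]
    refine congrArg Multiplicative.ofAdd (Prod.ext ?_ ?_)
    · show (((A * B) 0 1 : ℤ) : ZMod 2) = _
      have h : (A * B) 0 1 = A 0 0 * B 0 1 + A 0 1 * B 1 1 := by
        exact hmul.2.1
      rw [h]; push_cast
      rw [a_odd hs hA, d_odd hs hB]; simp [Prod.fst_add]; ring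
    · show ((((A * B) 1 0 : ℤ) / 2 ^ s : ℤ) : ZMod 2) = _
      have h1 : (A * B) 1 0 = A 1 0 * B 0 0 + A 1 1 * B 1 0 := by
        exact hmul.2.2.1
      have h2 : (A * B) 1 0 = 2 ^ s * (cA * B 0 0 + A 1 1 * cB) := by
        rw [h1, hcA, hcB]; ring
      have hne : (2 : ℤ) ^ s ≠ 0 := by positivity
      rw [h2, Int.mul_ediv_cancel_left _ hne, hcA, hcB,
        Int.mul_ediv_cancel_left _ hne, Int.mul_ediv_cancel_left _ hne]
      push_cast
      rw [a_odd hs hB, d_odd hs hA]; simp [Prod.snd_add]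

lemma psi_apply (s : ℕ) (hs : 1 ≤ s) (A : Gamma1 (2 ^ s)) :
    psi s hs A = Multiplicative.ofAdd
      ((((A : SL(2, ℤ)) 0 1 : ℤ) : ZMod 2),
        ((((A : SL(2, ℤ)) 1 0) / 2 ^ s : ℤ) : ZMod 2)) := rfl

lemma psi_ker (s : ℕ) (hs : 1 ≤ s) :
    (Gamma (2 ^ (s + 1))).subgroupOf (Gamma1 (2 ^ s)) ≤ (psi s hs).ker := by
  intro A hA
  rw [Subgroup.mem_subgroupOf, Gamma_mem] at hA
  obtain ⟨cb, hcb⟩ : ((2 : ℤ) ^ (s + 1)) ∣ (A : SL(2, ℤ)) 0 1 := by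
    have := (ZMod.intCast_zmod_eq_zero_iff_dvd _ (2 ^ (s + 1))).mp hA.2.1
    exact_mod_cast this
  obtain ⟨cc, hcc⟩ : ((2 : ℤ) ^ (s + 1)) ∣ (A : SL(2, ℤ)) 1 0 := by
    have := (ZMod.intCast_zmod_eq_zero_iff_dvd _ (2 ^ (s + 1))).mp hA.2.2.1
    exact_mod_cast this
  rw [MonoidHom.mem_ker, psi_apply]
  have h1 : ((((A : SL(2, ℤ)) 0 1 : ℤ)) : ZMod 2) = 0 := by
    rw [hcb]; push_cast; ring_nf
    simp [show (2 : ZMod 2) = 0 from rfl]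
  have h2 : ((((A : SL(2, ℤ)) 1 0) / 2 ^ s : ℤ) : ZMod 2) = 0 := by
    have hf : ((A : SL(2, ℤ)) 1 0) = 2 ^ s * (2 * cc) := by rw [hcc]; ring
    rw [hf, Int.mul_ediv_cancel_left _ (by positivity : (2 : ℤ) ^ s ≠ 0)]
    push_cast
    simp [show (2 : ZMod 2) = 0 from rfl]
  rw [h1, h2]; rfl

/-- `T` as an element of `Γ₁(2^s)`. -/
def tEl (s : ℕ) : Gamma1 (2 ^ s) :=
  ⟨ModularGroup.T, (Gamma1_mem _ _).mpr (by
    refine ⟨?_, ?_, ?_⟩ <;> simp [ModularGroup.T])⟩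

lemma tEl_coe (s : ℕ) : ((tEl s : SL(2, ℤ))) = ModularGroup.T := rfl

/-- `[[1,0],[2^s,1]]` as an element of `Γ₁(2^s)`. -/
def gEl (s : ℕ) : Gamma1 (2 ^ s) :=
  ⟨⟨!![1, 0; (2 : ℤ) ^ s, 1], by norm_num [Matrix.det_fin_two_of]⟩, (Gamma1_mem _ _).mpr (by
    refine ⟨by simp, by simp, ?_⟩
    show (((!![1, 0; (2 : ℤ) ^ s, 1]) 1 0 : ℤ) : ZMod (2 ^ s)) = 0
    simp
    exact_mod_cast ZMod.natCast_self (2 ^ s))⟩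

/-- the element `β = [τ,γ]·τ^{2^s}` of `Γ₁(2^s)`; it is `≡ diag(1+2^s, 1-2^s) mod 2^{s+1}`. -/
def bEl (s : ℕ) : Gamma1 (2 ^ s) :=
  tEl s * gEl s * (tEl s)⁻¹ * (gEl s)⁻¹ * tEl s ^ ((2 : ℤ) ^ s)

lemma bEl_coe (s : ℕ) : ((bEl s : SL(2, ℤ)) : Matrix (Fin 2) (Fin 2) ℤ) =
    !![1 + 2 ^ s + 2 ^ (2 * s), 2 ^ (2 * s) + 2 ^ (3 * s);
       2 ^ (2 * s), 1 - 2 ^ s + 2 ^ (3 * s)] := by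
  have h1 : ((bEl s : SL(2, ℤ))) =
      ModularGroup.T * (gEl s : SL(2, ℤ)) * ModularGroup.T⁻¹ * ((gEl s : SL(2, ℤ)))⁻¹ *
        ModularGroup.T ^ ((2 : ℤ) ^ s) := by
    simp [bEl, tEl]
  have hg : ((gEl s : SL(2, ℤ)) : Matrix (Fin 2) (Fin 2) ℤ) = !![1, 0; (2 : ℤ) ^ s, 1] := rfl
  have hgi : (((gEl s : SL(2, ℤ))⁻¹ : SL(2, ℤ)) : Matrix (Fin 2) (Fin 2) ℤ) =
      !![1, 0; -(2 : ℤ) ^ s, 1] := by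
    change adjugate ((gEl s : SL(2, ℤ)) : Matrix (Fin 2) (Fin 2) ℤ) = _
    rw [hg, Matrix.adjugate_fin_two]
    norm_num
  rw [h1]
  change ((T : SL(2, ℤ)) : Matrix (Fin 2) (Fin 2) ℤ) * ((gEl s : SL(2, ℤ)) : Matrix (Fin 2) (Fin 2) ℤ) * ((T⁻¹ : SL(2, ℤ)) : Matrix (Fin 2) (Fin 2) ℤ) *
    (((gEl s : SL(2, ℤ))⁻¹ : SL(2, ℤ)) : Matrix (Fin 2) (Fin 2) ℤ) * ((T ^ ((2 : ℤ) ^ s) : SL(2, ℤ)) : Matrix (Fin 2) (Fin 2) ℤ) = _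
  simp only [SpecialLinearGroup.coe_mul, hg, hgi, ModularGroup.coe_T, ModularGroup.coe_T_inv,
    ModularGroup.coe_T_zpow, Matrix.mul_fin_two]
  ext i j
  fin_cases i <;> fin_cases j <;> simp <;> ring

lemma mk_eq {s : ℕ} {P A : Gamma1 (2 ^ s)}
    (h : ∀ i j, (((P : SL(2, ℤ)) i j : ℤ) : ZMod (2 ^ (s + 1))) =
      (((A : SL(2, ℤ)) i j : ℤ) : ZMod (2 ^ (s + 1)))) :
    (QuotientGroup.mk P : Gamma1 (2 ^ s) ⧸ (Gamma (2 ^ (s + 1))).subgroupOf (Gamma1 (2 ^ s)))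
      = QuotientGroup.mk A := by
  rw [QuotientGroup.eq]
  rw [Subgroup.mem_subgroupOf]
  have hco : ((P⁻¹ * A : Gamma1 (2 ^ s)) : SL(2, ℤ)) = (P : SL(2, ℤ))⁻¹ * (A : SL(2, ℤ)) := by
    simp
  rw [hco]
  show (P : SL(2, ℤ))⁻¹ * (A : SL(2, ℤ)) ∈
    (Matrix.SpecialLinearGroup.map (Int.castRingHom (ZMod (2 ^ (s + 1))))).ker
  rw [MonoidHom.mem_ker, _root_.map_mul, _root_.map_inv, inv_mul_eq_one]
  ext i j
  rw [SL_reduction_mod_hom_val, SL_reduction_mod_hom_val]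
  exact h i j

lemma decomp (s : ℕ) (hs : 1 ≤ s) (A : Gamma1 (2 ^ s))
    (hb : (((A : SL(2, ℤ)) 0 1 : ℤ) : ZMod 2) = 0)
    (hc : ((((A : SL(2, ℤ)) 1 0) / 2 ^ s : ℤ) : ZMod 2) = 0) :
    ∃ (k : ℤ) (e : ℕ),
      (QuotientGroup.mk A : Gamma1 (2 ^ s) ⧸ (Gamma (2 ^ (s + 1))).subgroupOf (Gamma1 (2 ^ s)))
        = (QuotientGroup.mk (tEl s) :
            Gamma1 (2 ^ s) ⧸ (Gamma (2 ^ (s + 1))).subgroupOf (Gamma1 (2 ^ s))) ^ (2 * k) *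
          (QuotientGroup.mk (bEl s) :
            Gamma1 (2 ^ s) ⧸ (Gamma (2 ^ (s + 1))).subgroupOf (Gamma1 (2 ^ s))) ^ e := by
  have hs2 : ((2 : ZMod (2 ^ (s + 1)))) ^ s * 2 = 0 := by
    have h0 : ((2 ^ (s + 1) : ℕ) : ZMod (2 ^ (s + 1))) = 0 := ZMod.natCast_self _
    push_cast at h0
    rw [← h0]; ring
  have hss : ((2 : ZMod (2 ^ (s + 1)))) ^ s * (2 : ZMod (2 ^ (s + 1))) ^ s = 0 := by
    obtain ⟨t, ht⟩ : ∃ t, s = 1 + t := ⟨s - 1, by omega⟩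
    have h : ((2 : ZMod (2 ^ (s + 1)))) ^ s * (2 : ZMod (2 ^ (s + 1))) ^ s
        = ((2 : ZMod (2 ^ (s + 1))) ^ s * 2) * 2 ^ t := by rw [ht]; ring
    rw [h, hs2, zero_mul]
  obtain ⟨b2, hb2⟩ : (2 : ℤ) ∣ (A : SL(2, ℤ)) 0 1 := (ZMod.intCast_zmod_eq_zero_iff_dvd _ 2).mp hb
  obtain ⟨c1, hc1⟩ : (2 : ℤ) ^ s ∣ (A : SL(2, ℤ)) 1 0 := c_dvd A.2
  obtain ⟨c2, hc2⟩ : (2 : ℤ) ∣ c1 := by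
    have he : (((A : SL(2, ℤ)) 1 0) / 2 ^ s) = c1 := by
      rw [hc1]; exact Int.mul_ediv_cancel_left _ (by positivity)
    rw [he] at hc
    exact (ZMod.intCast_zmod_eq_zero_iff_dvd _ 2).mp hc
  have hcfin : ((A : SL(2, ℤ)) 1 0) = 2 ^ s * 2 * c2 := by rw [hc1, hc2]; ring
  obtain ⟨a1, ha1⟩ : (2 : ℤ) ^ s ∣ ((A : SL(2, ℤ)) 0 0) - 1 := by
    have h := ((Gamma1_mem _ _).mp A.2).1
    have := sub_one_dvd h
    exact_mod_cast this
  have ha1' : ((A : SL(2, ℤ)) 0 0) = 1 + 2 ^ s * a1 := by linarith [ha1]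
  have hdet : ((A : SL(2, ℤ)) 0 0) * ((A : SL(2, ℤ)) 1 1)
      - ((A : SL(2, ℤ)) 0 1) * ((A : SL(2, ℤ)) 1 0) = 1 := by
    have hd := (A : SL(2, ℤ)).prop
    rw [Matrix.det_fin_two] at hd
    exact hd
  have hdc := congrArg (fun z : ℤ => (z : ZMod (2 ^ (s + 1)))) hdet
  push_cast at hdc
  have hcM : (((A : SL(2, ℤ)) 1 0 : ℤ) : ZMod (2 ^ (s + 1))) = 0 := by
    rw [hcfin]; push_cast; linear_combination ((c2 : ZMod (2 ^ (s + 1)))) * hs2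
  rcases Int.even_or_odd a1 with ⟨m, hm⟩ | ⟨m, hm⟩
  · -- a1 even : A ≡ T^(2 b2)
    have haM : (((A : SL(2, ℤ)) 0 0 : ℤ) : ZMod (2 ^ (s + 1))) = 1 := by
      rw [ha1', hm]; push_cast; linear_combination ((m : ZMod (2 ^ (s + 1)))) * hs2
    refine ⟨b2, 0, ?_⟩
    rw [pow_zero, mul_one, ← QuotientGroup.mk_zpow]
    refine (mk_eq ?_).symm
    have hP : ((tEl s ^ (2 * b2) : Gamma1 (2 ^ s)) : SL(2, ℤ)) = ModularGroup.T ^ (2 * b2) := by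
      rw [← tEl_coe s]; norm_cast
    intro i j
    rw [hP]
    fin_cases i <;> fin_cases j <;>
      simp only [ModularGroup.coe_T_zpow, Fin.mk_zero, Fin.mk_one, Matrix.cons_val',
        Matrix.cons_val_zero, Matrix.cons_val_one, Matrix.head_cons, Matrix.head_fin_const,
        Matrix.empty_val', Matrix.cons_val_fin_one, Matrix.of_apply]
    · rw [haM]; norm_num
    · rw [hb2]
    · rw [hcM]; norm_num
    · rw [haM, hcM] at hdc
      push_cast
      linear_combination -hdc
  · -- a1 odd : A ≡ T^(2 k) * B with k = b2 (1+2^s)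
    have haM : (((A : SL(2, ℤ)) 0 0 : ℤ) : ZMod (2 ^ (s + 1)))
        = 1 + (2 : ZMod (2 ^ (s + 1))) ^ s := by
      rw [ha1', hm]; push_cast; linear_combination ((m : ZMod (2 ^ (s + 1)))) * hs2
    refine ⟨b2 * (1 + 2 ^ s), 1, ?_⟩
    rw [pow_one, ← QuotientGroup.mk_zpow, ← QuotientGroup.mk_mul]
    refine (mk_eq ?_).symm
    have hP : (((tEl s ^ (2 * (b2 * (1 + 2 ^ s))) * bEl s : Gamma1 (2 ^ s))) : SL(2, ℤ))
        = ModularGroup.T ^ (2 * (b2 * (1 + 2 ^ s))) * (bEl s : SL(2, ℤ)) := by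
      rw [← tEl_coe s]; norm_cast
    have hPmat : (((tEl s ^ (2 * (b2 * (1 + 2 ^ s))) * bEl s : Gamma1 (2 ^ s)) : SL(2, ℤ))
        : Matrix (Fin 2) (Fin 2) ℤ)
        = !![1, 2 * (b2 * (1 + 2 ^ s)); 0, 1] *
          !![1 + 2 ^ s + 2 ^ (2 * s), 2 ^ (2 * s) + 2 ^ (3 * s);
             2 ^ (2 * s), 1 - 2 ^ s + 2 ^ (3 * s)] := by
      rw [hP]
      change ((T ^ (2 * (b2 * (1 + 2 ^ s))) : SL(2, ℤ)) : Matrix (Fin 2) (Fin 2) ℤ) * ((bEl s : SL(2, ℤ)) : Matrix (Fin 2) (Fin 2) ℤ) = _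
      rw [ModularGroup.coe_T_zpow, bEl_coe]
    intro i j
    rw [hPmat, Matrix.mul_fin_two]
    fin_cases i <;> fin_cases j <;>
      simp only [Fin.mk_zero, Fin.mk_one, Matrix.cons_val', Matrix.cons_val_zero,
        Matrix.cons_val_one, Matrix.head_cons, Matrix.head_fin_const, Matrix.empty_val',
        Matrix.cons_val_fin_one, Matrix.of_apply]
    · rw [haM]; push_cast
      linear_combination (1 + 2 * (b2 : ZMod (2 ^ (s + 1)))
        * (1 + (2 : ZMod (2 ^ (s + 1))) ^ s)) * hss
    · rw [hb2]; push_cast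
      linear_combination (1 + (2 : ZMod (2 ^ (s + 1))) ^ s + 2 * (b2 : ZMod (2 ^ (s + 1)))
        * (-1 + (2 : ZMod (2 ^ (s + 1))) ^ s + (2 : ZMod (2 ^ (s + 1))) ^ s
          * (2 : ZMod (2 ^ (s + 1))) ^ s)) * hss
    · rw [hcM]; push_cast
      linear_combination hss
    · rw [haM, hcM] at hdc
      push_cast
      linear_combination ((2 : ZMod (2 ^ (s + 1))) ^ s - 1) * hdc
        + ((2 : ZMod (2 ^ (s + 1))) ^ s - (((A : SL(2, ℤ)) 1 1 : ℤ) : ZMod (2 ^ (s + 1)))) * hss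

lemma psi_tEl (s : ℕ) (hs : 1 ≤ s) :
    psi s hs (tEl s) = Multiplicative.ofAdd ((1 : ZMod 2), (0 : ZMod 2)) := by
  rw [psi_apply]
  refine congrArg Multiplicative.ofAdd (Prod.ext ?_ ?_)
  · show (((ModularGroup.T : SL(2, ℤ)) 0 1 : ℤ) : ZMod 2) = 1
    simp [ModularGroup.T]
  · show ((((ModularGroup.T : SL(2, ℤ)) 1 0 : ℤ) / 2 ^ s : ℤ) : ZMod 2) = 0
    have h : ((ModularGroup.T : SL(2, ℤ)) 1 0 : ℤ) = 0 := by simp [ModularGroup.T]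
    rw [h, Int.zero_ediv]
    simp

lemma psi_gEl (s : ℕ) (hs : 1 ≤ s) :
    psi s hs (gEl s) = Multiplicative.ofAdd ((0 : ZMod 2), (1 : ZMod 2)) := by
  rw [psi_apply]
  refine congrArg Multiplicative.ofAdd (Prod.ext ?_ ?_)
  · show (((!![1, 0; (2 : ℤ) ^ s, 1]) 0 1 : ℤ) : ZMod 2) = 0
    simp
  · show ((((!![1, 0; (2 : ℤ) ^ s, 1]) 1 0 : ℤ) / 2 ^ s : ℤ) : ZMod 2) = 1
    simp [Int.ediv_self (by positivity : (2 : ℤ) ^ s ≠ 0)]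

end Stmt17

/-- For `s ≥ 1` and `G₁ = Γ₁(2ˢ)/Γ(2^{s+1})`, the quotient `G₁/(G₁'G₁²)` is isomorphic to
`(ℤ/2)²` (i.e. `G₁'G₁²` has index 4 and the quotient is elementary abelian), and the image
of `-I` lies in `G₁'G₁²` if and only if `s = 1`. -/
theorem stmt_17 (s : ℕ) (hs : 1 ≤ s)
    (S : Subgroup (Gamma1 (2 ^ s) ⧸ (Gamma (2 ^ (s + 1))).subgroupOf (Gamma1 (2 ^ s))))
    (hS : S = commutator (Gamma1 (2 ^ s) ⧸ (Gamma (2 ^ (s + 1))).subgroupOf (Gamma1 (2 ^ s))) ⊔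
      Subgroup.closure
        {x : Gamma1 (2 ^ s) ⧸ (Gamma (2 ^ (s + 1))).subgroupOf (Gamma1 (2 ^ s)) |
          ∃ g, x = g ^ 2}) :
    S.index = 4 ∧
    (∀ x : Gamma1 (2 ^ s) ⧸ (Gamma (2 ^ (s + 1))).subgroupOf (Gamma1 (2 ^ s)), x ^ 2 ∈ S) ∧
    ((∃ hneg : (-1 : SL(2, ℤ)) ∈ Gamma1 (2 ^ s),
        (QuotientGroup.mk (⟨-1, hneg⟩ : Gamma1 (2 ^ s)) :
          Gamma1 (2 ^ s) ⧸ (Gamma (2 ^ (s + 1))).subgroupOf (Gamma1 (2 ^ s))) ∈ S) ↔ s = 1) := by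
  set φ : (Gamma1 (2 ^ s) ⧸ (Gamma (2 ^ (s + 1))).subgroupOf (Gamma1 (2 ^ s))) →*
      Multiplicative (ZMod 2 × ZMod 2) :=
    QuotientGroup.lift _ (Stmt17.psi s hs) (Stmt17.psi_ker s hs) with hphi
  have hsq1 : ∀ z : Multiplicative (ZMod 2 × ZMod 2), z ^ 2 = 1 := by decide
  -- squares lie in S
  have hSsq : ∀ x : Gamma1 (2 ^ s) ⧸ (Gamma (2 ^ (s + 1))).subgroupOf (Gamma1 (2 ^ s)),
      x ^ 2 ∈ S := by
    intro x
    rw [hS]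
    exact Subgroup.mem_sup_right (Subgroup.subset_closure ⟨x, rfl⟩)
  -- S is contained in ker φ
  have hSle : S ≤ φ.ker := by
    rw [hS]
    apply sup_le
    · rw [commutator_def, Subgroup.commutator_le]
      intro x _ y _
      rw [MonoidHom.mem_ker, map_commutatorElement]
      exact commutatorElement_eq_one_iff_commute.mpr (mul_comm _ _)
    · rw [Subgroup.closure_le]
      rintro x ⟨g, rfl⟩
      rw [SetLike.mem_coe, MonoidHom.mem_ker, map_pow]
      exact hsq1 _
  -- the image of bEl lies in S
  have hbS : (QuotientGroup.mk (Stmt17.bEl s) :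
      Gamma1 (2 ^ s) ⧸ (Gamma (2 ^ (s + 1))).subgroupOf (Gamma1 (2 ^ s))) ∈ S := by
    open commutatorElement in
    have hmk : (QuotientGroup.mk (Stmt17.bEl s) :
        Gamma1 (2 ^ s) ⧸ (Gamma (2 ^ (s + 1))).subgroupOf (Gamma1 (2 ^ s))) =
        ⁅(QuotientGroup.mk (Stmt17.tEl s) :
            Gamma1 (2 ^ s) ⧸ (Gamma (2 ^ (s + 1))).subgroupOf (Gamma1 (2 ^ s))),
          (QuotientGroup.mk (Stmt17.gEl s) :
            Gamma1 (2 ^ s) ⧸ (Gamma (2 ^ (s + 1))).subgroupOf (Gamma1 (2 ^ s)))⁆ *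
        (QuotientGroup.mk (Stmt17.tEl s) :
            Gamma1 (2 ^ s) ⧸ (Gamma (2 ^ (s + 1))).subgroupOf (Gamma1 (2 ^ s))) ^ ((2 : ℤ) ^ s)
        := by
      rw [commutatorElement_def, Stmt17.bEl, QuotientGroup.mk_mul, QuotientGroup.mk_mul,
        QuotientGroup.mk_mul, QuotientGroup.mk_mul, QuotientGroup.mk_inv, QuotientGroup.mk_inv,
        QuotientGroup.mk_zpow]
    rw [hmk]
    refine S.mul_mem (hS ▸ Subgroup.mem_sup_left
      (Subgroup.commutator_mem_commutator (Subgroup.mem_top _) (Subgroup.mem_top _))) ?_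
    obtain ⟨t, ht⟩ : ∃ t, s = t + 1 := ⟨s - 1, by omega⟩
    have h2 : (QuotientGroup.mk (Stmt17.tEl s) :
        Gamma1 (2 ^ s) ⧸ (Gamma (2 ^ (s + 1))).subgroupOf (Gamma1 (2 ^ s))) ^ ((2 : ℤ) ^ s)
        = ((QuotientGroup.mk (Stmt17.tEl s) :
            Gamma1 (2 ^ s) ⧸ (Gamma (2 ^ (s + 1))).subgroupOf (Gamma1 (2 ^ s)))
              ^ ((2 : ℤ) ^ t)) ^ (2 : ℕ) := by
      rw [← zpow_natCast _ 2, ← zpow_mul]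
      congr 1
      rw [ht]; ring
    rw [h2]
    exact hSsq _
  -- kernel conditions imply membership in S
  have hkey : ∀ A : Gamma1 (2 ^ s),
      (((A : SL(2, ℤ)) 0 1 : ℤ) : ZMod 2) = 0 →
      ((((A : SL(2, ℤ)) 1 0) / 2 ^ s : ℤ) : ZMod 2) = 0 →
      (QuotientGroup.mk A :
        Gamma1 (2 ^ s) ⧸ (Gamma (2 ^ (s + 1))).subgroupOf (Gamma1 (2 ^ s))) ∈ S := by
    intro A hb hc
    obtain ⟨k, e, heq⟩ := Stmt17.decomp s hs A hb hc
    rw [heq]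
    refine S.mul_mem ?_ (S.pow_mem hbS e)
    have h2 : (QuotientGroup.mk (Stmt17.tEl s) :
        Gamma1 (2 ^ s) ⧸ (Gamma (2 ^ (s + 1))).subgroupOf (Gamma1 (2 ^ s))) ^ (2 * k)
        = ((QuotientGroup.mk (Stmt17.tEl s) :
            Gamma1 (2 ^ s) ⧸ (Gamma (2 ^ (s + 1))).subgroupOf (Gamma1 (2 ^ s))) ^ k)
              ^ (2 : ℕ) := by
      rw [← zpow_natCast _ 2, ← zpow_mul]
      congr 1
      ring
    rw [h2]
    exact hSsq _
  -- ker φ ≤ S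
  have hkerle : φ.ker ≤ S := by
    intro x hx
    obtain ⟨A, rfl⟩ := QuotientGroup.mk_surjective x
    rw [MonoidHom.mem_ker, hphi, QuotientGroup.lift_mk', Stmt17.psi_apply, ofAdd_eq_one,
      Prod.ext_iff] at hx
    exact hkey A (by simpa using hx.1) (by simpa using hx.2)
  have hSeq : S = φ.ker := le_antisymm hSle hkerle
  -- φ is surjective
  have hsurj : Function.Surjective φ := by
    intro z
    refine ⟨(QuotientGroup.mk (Stmt17.tEl s) :
        Gamma1 (2 ^ s) ⧸ (Gamma (2 ^ (s + 1))).subgroupOf (Gamma1 (2 ^ s))) ^ (z.toAdd.1.val) *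
      (QuotientGroup.mk (Stmt17.gEl s) :
        Gamma1 (2 ^ s) ⧸ (Gamma (2 ^ (s + 1))).subgroupOf (Gamma1 (2 ^ s))) ^ (z.toAdd.2.val),
      ?_⟩
    rw [map_mul, map_pow, map_pow, hphi, QuotientGroup.lift_mk', QuotientGroup.lift_mk',
      Stmt17.psi_tEl s hs, Stmt17.psi_gEl s hs, ← ofAdd_nsmul, ← ofAdd_nsmul, ← ofAdd_add]
    conv_rhs => rw [← ofAdd_toAdd z]
    refine congrArg Multiplicative.ofAdd (Prod.ext ?_ ?_) <;>
      simp [nsmul_eq_mul, ZMod.natCast_val, ZMod.cast_id]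
  have hidx : S.index = 4 := by
    rw [hSeq, Subgroup.index_ker, MonoidHom.range_eq_top.mpr hsurj, Subgroup.card_top,
      Nat.card_eq_fintype_card]
    rfl
  refine ⟨hidx, hSsq, ?_⟩
  constructor
  · rintro ⟨hneg, -⟩
    have h00 : (((-1 : SL(2, ℤ)) 0 0 : ℤ) : ZMod (2 ^ s)) = 1 := ((Gamma1_mem _ _).mp hneg).1
    have hm1 : ((-1 : SL(2, ℤ)) 0 0 : ℤ) = -1 := by
      simp [Matrix.SpecialLinearGroup.coe_neg]
    rw [hm1] at h00
    have h2 : ((2 : ℤ) : ZMod (2 ^ s)) = 0 := by push_cast at h00 ⊢; linear_combination -h00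
    have hdvd : ((2 : ℤ) ^ s) ∣ 2 := by
      have := (ZMod.intCast_zmod_eq_zero_iff_dvd 2 (2 ^ s)).mp h2
      exact_mod_cast this
    have hdvd' : (2 : ℕ) ^ s ∣ 2 := by exact_mod_cast hdvd
    have hle : (2 : ℕ) ^ s ≤ 2 := Nat.le_of_dvd (by norm_num) hdvd'
    have : ¬ 2 ≤ s := by
      intro h2s
      have := Nat.pow_le_pow_right (show 1 ≤ 2 by norm_num) h2s
      simp at this
      omega
    omega
  · intro h1
    subst h1
    have hneg : (-1 : SL(2, ℤ)) ∈ Gamma1 (2 ^ 1) := by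
      rw [Gamma1_mem]
      refine ⟨?_, ?_, ?_⟩ <;> simp [Matrix.SpecialLinearGroup.coe_neg] <;> decide
    refine ⟨hneg, ?_⟩
    refine hkey _ ?_ ?_
    · have : ((-1 : SL(2, ℤ)) 0 1 : ℤ) = 0 := by simp [Matrix.SpecialLinearGroup.coe_neg]
      rw [this]; simp
    · have : ((-1 : SL(2, ℤ)) 1 0 : ℤ) = 0 := by simp [Matrix.SpecialLinearGroup.coe_neg]
      rw [this, Int.zero_ediv]; simp
end

section
/- Suppose Γ₂ ⊆ Γ₁ are finite-index subgroups of SL₂(ℤ), and suppose there exists a subgroup Δ₁ ≤ SL₂(ℤ) whose image in PSL₂(ℤ) equals the image of Γ₁ and such that Δ₁ is not a congruence subgroup. Then there exists a subgroup Δ₂ ≤ SL₂(ℤ) whose image in PSL₂(ℤ) equals the image of Γ₂ and which is not a congruence subgroup: namely, the preimage in Δ₁ of the image of Γ₂ in PSL₂(ℤ). -/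
open CongruenceSubgroup
open scoped MatrixGroups

/-- If `Γ₂ ⊆ Γ₁` are finite-index subgroups of `SL₂(ℤ)` and `Δ₁` is a noncongruence lift
of the image of `Γ₁` in `PSL₂(ℤ)` (= `SL₂(ℤ)` modulo its center `{±I}`), then the preimage
in `Δ₁` of the image of `Γ₂` is a noncongruence lift of the image of `Γ₂`. -/
theorem stmt_19 (Γ₁ Γ₂ Δ₁ : Subgroup SL(2, ℤ))
    (h21 : Γ₂ ≤ Γ₁) (hfin1 : Γ₁.FiniteIndex) (hfin2 : Γ₂.FiniteIndex)
    (π : SL(2, ℤ) →* SL(2, ℤ) ⧸ Subgroup.center SL(2, ℤ))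
    (hπ : π = QuotientGroup.mk' (Subgroup.center SL(2, ℤ)))
    (hΔ₁ : Δ₁.map π = Γ₁.map π)
    (hnc : ¬ IsCongruenceSubgroup Δ₁) :
    ∃ Δ₂ : Subgroup SL(2, ℤ),
      Δ₂ = Δ₁ ⊓ (Γ₂.map π).comap π ∧
      Δ₂.map π = Γ₂.map π ∧
      ¬ IsCongruenceSubgroup Δ₂ := by
  refine ⟨Δ₁ ⊓ (Γ₂.map π).comap π, rfl, ?_, ?_⟩
  · apply le_antisymm
    · rintro x ⟨g, ⟨-, hg2⟩, rfl⟩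
      exact hg2
    · rintro x ⟨g, hg, rfl⟩
      have hmem : π g ∈ Δ₁.map π := by
        rw [hΔ₁]
        exact ⟨g, h21 hg, rfl⟩
      obtain ⟨d, hd, hdg⟩ := hmem
      exact ⟨d, ⟨hd, Subgroup.mem_comap.mpr (hdg ▸ ⟨g, hg, rfl⟩)⟩, hdg⟩
  · rintro ⟨N, hle⟩
    exact hnc ⟨N, hle.1, hle.2.trans inf_le_left⟩
end
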